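/- Consider the triple (k,B,ε), where ε : B → k is a k-algebra homomorphism, and let M be a k-module regarded as a B-symmetric bimodule via ε. Then H₁((k,B,ε);M) = 0 and there are k-module isomorphisms H₂((k,B,ε);M) ≅ H₁(B,M) ≅ M⊗_B Ω¹_{B/k}, where M is a B-module via b·m = ε(b)m and Ω¹_{B/k} is the module of Kähler differentials of B over k. -/

import Mathlib

/-!
STATEMENT 17: Consider the triple (k,B,ε) where ε : B → k is a k-algebra homomorphism,
and let M be a k-module regarded as a B-symmetric bimodule via ε.  Then
H₁((k,B,ε);M) = 0 and there are k-module isomorphisms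
H₂((k,B,ε);M) ≅ H₁(B,M) ≅ M ⊗_B Ω¹_{B/k},
where M is a B-module via b·m = ε(b)·m and Ω¹_{B/k} is the module of Kähler
differentials of B over k.

Chain groups: C₁ = M⊗k, C₂ = M⊗k⊗k⊗B, C₃ = M⊗k⊗k⊗k⊗B⊗B⊗B;
H₁((k,B,ε);M) = ker ∂₁ / im ∂₂, H₂((k,B,ε);M) = ker ∂₂ / im ∂₃, and
H₁(B,M) = (M⊗B)/im d₂^B.  The differentials are quantified universally,
characterized by their values on pure tensors.
-/

open TensorProduct MulOpposite

set_option maxSynthPendingDepth 8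
set_option maxHeartbeats 1000000

theorem secondaryHochschild_of_base_kTriple
    (k : Type*) [CommRing k]
    (B : Type*) [CommRing B] [Algebra k B]
    (ε : B →ₐ[k] k)
    (M : Type*) [AddCommGroup M] [Module k M]
    -- M as a B-module via ε
    [Module B M] (hBM : ∀ (b : B) (m : M), b • m = ε b • m)
    [SMulCommClass B k M]
    -- the secondary Hochschild differentials ∂₁, ∂₂, ∂₃ of the triple (k,B,ε)
    (p1 : M ⊗[k] k →ₗ[k] M)
    (hp1 : ∀ (m : M) (a : k), p1 (m ⊗ₜ[k] a) = a • m - a • m)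
    (p2 : M ⊗[k] k ⊗[k] k ⊗[k] B →ₗ[k] M ⊗[k] k)
    (hp2 : ∀ (m : M) (a b : k) (α : B),
      p2 (m ⊗ₜ[k] a ⊗ₜ[k] b ⊗ₜ[k] α) =
        ((a * ε α) • m) ⊗ₜ[k] b - m ⊗ₜ[k] (a * ε α * b) + ((b * ε α) • m) ⊗ₜ[k] a)
    (p3 : M ⊗[k] k ⊗[k] k ⊗[k] k ⊗[k] B ⊗[k] B ⊗[k] B →ₗ[k] M ⊗[k] k ⊗[k] k ⊗[k] B)
    (hp3 : ∀ (m : M) (a b c : k) (α β γ : B),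
      p3 (m ⊗ₜ[k] a ⊗ₜ[k] b ⊗ₜ[k] c ⊗ₜ[k] α ⊗ₜ[k] β ⊗ₜ[k] γ) =
        ((a * ε (α * β)) • m) ⊗ₜ[k] b ⊗ₜ[k] c ⊗ₜ[k] γ
        - m ⊗ₜ[k] (a * ε α * b) ⊗ₜ[k] c ⊗ₜ[k] (β * γ)
        + m ⊗ₜ[k] a ⊗ₜ[k] (b * ε γ * c) ⊗ₜ[k] (α * β)
        - ((c * ε (β * γ)) • m) ⊗ₜ[k] a ⊗ₜ[k] b ⊗ₜ[k] α)
    -- the Hochschild differential d₂^B for B with coefficients in M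
    (d2B : M ⊗[k] B ⊗[k] B →ₗ[k] M ⊗[k] B)
    (hd2B : ∀ (m : M) (α β : B),
      d2B (m ⊗ₜ[k] α ⊗ₜ[k] β) =
        (ε α • m) ⊗ₜ[k] β - m ⊗ₜ[k] (α * β) + (ε β • m) ⊗ₜ[k] α) :
    -- H₁((k,B,ε);M) = 0
    LinearMap.ker p1 ≤ LinearMap.range p2 ∧
    -- H₂((k,B,ε);M) ≅ H₁(B,M)
    Nonempty ((↥(LinearMap.ker p2) ⧸ (LinearMap.range p3).comap (LinearMap.ker p2).subtype)
      ≃ₗ[k] ((M ⊗[k] B) ⧸ LinearMap.range d2B)) ∧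
    -- H₁(B,M) ≅ M ⊗_B Ω¹_{B/k}
    Nonempty (((M ⊗[k] B) ⧸ LinearMap.range d2B) ≃ₗ[k] (M ⊗[B] Ω[B⁄k])) := by
  refine ⟨?_, ?_, ?_⟩
  · -- H₁((k,B,ε);M) = 0 : everything is in the range of p2
    intro x _
    refine ⟨(TensorProduct.rid k M x) ⊗ₜ[k] (1:k) ⊗ₜ[k] (1:k) ⊗ₜ[k] (1:B), ?_⟩
    rw [hp2]
    simp only [map_one, one_mul, mul_one, one_smul]
    rw [sub_self, zero_add, ← TensorProduct.rid_symm_apply, LinearEquiv.symm_apply_apply]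
  · -- H₂((k,B,ε);M) ≅ H₁(B,M)
    -- collapsing isomorphisms
    let e₂ : (M ⊗[k] k ⊗[k] k ⊗[k] B) ≃ₗ[k] (M ⊗[k] B) :=
      TensorProduct.congr ((TensorProduct.rid k (M ⊗[k] k)).trans (TensorProduct.rid k M))
        (LinearEquiv.refl k B)
    have he₂ : ∀ (m : M) (a b : k) (α : B),
        e₂ (m ⊗ₜ[k] a ⊗ₜ[k] b ⊗ₜ[k] α) = m ⊗ₜ[k] ((a * b) • α) := by
      intro m a b α
      simp [e₂, TensorProduct.congr_tmul, TensorProduct.lid_tmul, mul_smul]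
      simp only [smul_tmul', smul_smul, mul_comm, mul_assoc, mul_left_comm]
    let e₃ : (M ⊗[k] k ⊗[k] k ⊗[k] k ⊗[k] B ⊗[k] B ⊗[k] B) ≃ₗ[k] (M ⊗[k] B ⊗[k] B ⊗[k] B) :=
      TensorProduct.congr (TensorProduct.congr (TensorProduct.congr
        ((TensorProduct.rid k (M ⊗[k] k ⊗[k] k)).trans
          ((TensorProduct.rid k (M ⊗[k] k)).trans (TensorProduct.rid k M)))
        (LinearEquiv.refl k B)) (LinearEquiv.refl k B)) (LinearEquiv.refl k B)
    have he₃ : ∀ (m : M) (a b c : k) (α β γ : B),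
        e₃ (m ⊗ₜ[k] a ⊗ₜ[k] b ⊗ₜ[k] c ⊗ₜ[k] α ⊗ₜ[k] β ⊗ₜ[k] γ) =
          ((a * (b * c)) • m) ⊗ₜ[k] α ⊗ₜ[k] β ⊗ₜ[k] γ := by
      intro m a b c α β γ
      simp [e₃, TensorProduct.congr_tmul, TensorProduct.lid_tmul, mul_smul]
      simp only [smul_tmul', smul_smul, mul_comm, mul_assoc, mul_left_comm]
    -- q2 : M ⊗ B → M,  m ⊗ α ↦ ε α • m
    let q2 : M ⊗[k] B →ₗ[k] M :=
      (TensorProduct.rid k M).toLinearMap ∘ₗ LinearMap.lTensor M ε.toLinearMap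
    have hq2 : ∀ (m : M) (α : B), q2 (m ⊗ₜ[k] α) = ε α • m := by
      intro m α; simp [q2]
    -- ι : M → M ⊗ B,  m ↦ m ⊗ 1
    let ι : M →ₗ[k] M ⊗[k] B := (TensorProduct.mk k M B).flip 1
    have hι : ∀ m : M, ι m = m ⊗ₜ[k] (1 : B) := fun m => rfl
    -- Gq : M⊗B⊗B⊗B → M⊗B⊗B
    let Gq : (M ⊗[k] B ⊗[k] B ⊗[k] B) →ₗ[k] (M ⊗[k] B ⊗[k] B) :=
      (TensorProduct.assoc k M B B).symm.toLinearMap ∘ₗ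
          LinearMap.rTensor (B ⊗[k] B) q2 ∘ₗ (TensorProduct.assoc k (M ⊗[k] B) B B).toLinearMap
        - (TensorProduct.rid k (M ⊗[k] B ⊗[k] B)).toLinearMap ∘ₗ
            LinearMap.lTensor (M ⊗[k] B ⊗[k] B) ε.toLinearMap
    have hGq : ∀ (m : M) (α β γ : B),
        Gq (m ⊗ₜ[k] α ⊗ₜ[k] β ⊗ₜ[k] γ) =
          ε α • (m ⊗ₜ[k] β ⊗ₜ[k] γ) - ε γ • (m ⊗ₜ[k] α ⊗ₜ[k] β) := by
      intro m α β γ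
      simp [Gq, LinearMap.sub_apply, LinearMap.lTensor_tmul, LinearMap.rTensor_tmul,
        TensorProduct.lid_tmul, TensorProduct.rid_tmul, tmul_smul, hq2, smul_tmul']
    -- T : M⊗B⊗B → M⊗B⊗B⊗B
    let T : (M ⊗[k] B ⊗[k] B) →ₗ[k] (M ⊗[k] B ⊗[k] B ⊗[k] B) :=
      LinearMap.rTensor B (LinearMap.rTensor B ι)
    have hT : ∀ (m : M) (α β : B),
        T (m ⊗ₜ[k] α ⊗ₜ[k] β) = m ⊗ₜ[k] (1 : B) ⊗ₜ[k] α ⊗ₜ[k] β := fun m α β => rfl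
    have hkey2 : p2 = (TensorProduct.rid k M).symm.toLinearMap ∘ₗ q2 ∘ₗ e₂.toLinearMap := by
      ext m α
      simp only [TensorProduct.AlgebraTensorModule.curry_apply, TensorProduct.curry_apply,
        LinearMap.coe_restrictScalars, LinearMap.comp_apply, LinearEquiv.coe_coe]
      rw [hp2, he₂, hq2]
      simp only [one_mul, mul_one, one_smul]
      rw [TensorProduct.rid_symm_apply,
        ← (show ((ε α • m) ⊗ₜ[k] (1:k) = m ⊗ₜ[k] ε α) by
            rw [smul_tmul, smul_eq_mul, mul_one])]
      abel
    have hker_iff : ∀ v, p2 v = 0 ↔ q2 (e₂ v) = 0 := by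
      intro v
      rw [hkey2]
      simp only [LinearMap.comp_apply, LinearEquiv.coe_coe]
      exact (TensorProduct.rid k M).symm.map_eq_zero_iff
    have hkey3 : e₂.toLinearMap ∘ₗ p3 = d2B ∘ₗ (Gq ∘ₗ e₃.toLinearMap) := by
      ext m α β γ
      simp only [TensorProduct.AlgebraTensorModule.curry_apply, TensorProduct.curry_apply,
        LinearMap.coe_restrictScalars, LinearMap.comp_apply, LinearEquiv.coe_coe]
      rw [hp3, he₃]
      simp only [one_mul, mul_one, one_smul, map_sub, map_add, he₂, hGq, map_smul, hd2B]
      simp only [map_mul, one_mul, mul_one, ← TensorProduct.smul_tmul',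
        TensorProduct.tmul_smul, smul_sub, smul_add, smul_smul]
      module
    have hTid : d2B ∘ₗ (Gq ∘ₗ T) = d2B - ι ∘ₗ (q2 ∘ₗ d2B) := by
      ext m α β
      simp only [TensorProduct.AlgebraTensorModule.curry_apply, TensorProduct.curry_apply,
        LinearMap.coe_restrictScalars, LinearMap.comp_apply, LinearMap.sub_apply]
      rw [hT]
      simp only [hGq, map_sub, map_smul, hd2B, map_one, one_smul, one_mul, hq2, hι]
      simp only [map_mul, map_add, map_sub, hq2, map_smul, one_mul, mul_one,
        TensorProduct.add_tmul, TensorProduct.sub_tmul,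
        ← TensorProduct.smul_tmul', TensorProduct.tmul_smul, smul_sub, smul_add, smul_smul]
      module
    -- the map F : ker p2 → (M⊗B)/im d2B
    let F : (LinearMap.ker p2) →ₗ[k] ((M ⊗[k] B) ⧸ LinearMap.range d2B) :=
      (LinearMap.range d2B).mkQ ∘ₗ e₂.toLinearMap ∘ₗ (LinearMap.ker p2).subtype
    have hF : ∀ x : LinearMap.ker p2, F x = Submodule.Quotient.mk (e₂ x.1) := fun x => rfl
    have mem1 : ∀ m : M, m ⊗ₜ[k] (1 : B) ∈ LinearMap.range d2B := fun m =>
      ⟨m ⊗ₜ[k] (1:B) ⊗ₜ[k] (1:B), by simp [hd2B]⟩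
    have hFsurj : Function.Surjective F := by
      intro q
      obtain ⟨y, rfl⟩ := Submodule.Quotient.mk_surjective _ q
      have hy' : q2 (y - (q2 y) ⊗ₜ[k] (1:B)) = 0 := by
        rw [map_sub, hq2, map_one, one_smul, sub_self]
      refine ⟨⟨e₂.symm (y - (q2 y) ⊗ₜ[k] (1:B)), ?_⟩, ?_⟩
      · rw [LinearMap.mem_ker, hker_iff, e₂.apply_symm_apply]
        exact hy'
      · rw [hF]
        simp only [e₂.apply_symm_apply]
        rw [Submodule.Quotient.mk_sub, (Submodule.Quotient.mk_eq_zero _).2 (mem1 (q2 y)),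
          sub_zero]
    have hFker : LinearMap.ker F = (LinearMap.range p3).comap (LinearMap.ker p2).subtype := by
      ext x
      obtain ⟨v, hv⟩ := x
      simp only [LinearMap.mem_ker, Submodule.mem_comap, LinearMap.mem_range,
        Submodule.coe_subtype]
      rw [hF]
      simp only [Submodule.Quotient.mk_eq_zero, LinearMap.mem_range]
      constructor
      · rintro ⟨z, hz⟩
        refine ⟨e₃.symm (T z), ?_⟩
        apply e₂.injective
        have h1 : e₂ (p3 (e₃.symm (T z))) = d2B (Gq (e₃ (e₃.symm (T z)))) := by
          have := congrFun (congrArg DFunLike.coe hkey3) (e₃.symm (T z))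
          simpa using this
        rw [h1, e₃.apply_symm_apply]
        have h2 : d2B (Gq (T z)) = d2B z - ι (q2 (d2B z)) := by
          have := congrFun (congrArg DFunLike.coe hTid) z
          simpa using this
        rw [h2, hz]
        have h3 : q2 (e₂ v) = 0 := (hker_iff v).1 hv
        rw [h3, map_zero, sub_zero]
      · rintro ⟨w, hw⟩
        refine ⟨Gq (e₃ w), ?_⟩
        have h1 : e₂ (p3 w) = d2B (Gq (e₃ w)) := by
          have := congrFun (congrArg DFunLike.coe hkey3) w
          simpa using this
        rw [← h1, hw]
    exact ⟨(Submodule.quotEquivOfEq _ _ hFker.symm).trans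
      (F.quotKerEquivOfSurjective hFsurj)⟩
  · -- H₁(B,M) ≅ M ⊗[B] Ω[B⁄k]
    haveI hTower : IsScalarTower k B M :=
      ⟨fun c b m => by rw [hBM, hBM, map_smul, smul_assoc]⟩
    letI instBQ : Module B ((M ⊗[k] B) ⧸ LinearMap.range d2B) :=
      Module.compHom _ ε.toRingHom
    have hsmulQ : ∀ (b : B) (q : (M ⊗[k] B) ⧸ LinearMap.range d2B), b • q = ε b • q :=
      fun b q => rfl
    haveI : IsScalarTower k B ((M ⊗[k] B) ⧸ LinearMap.range d2B) :=
      ⟨fun c b q => by rw [hsmulQ, hsmulQ, map_smul, smul_assoc]⟩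
    have mem1 : ∀ m : M, m ⊗ₜ[k] (1 : B) ∈ LinearMap.range d2B := fun m =>
      ⟨m ⊗ₜ[k] (1:B) ⊗ₜ[k] (1:B), by simp [hd2B]⟩
    -- the derivation δ m : B → Q,  α ↦ [m ⊗ α]
    let δ : M → Derivation k B ((M ⊗[k] B) ⧸ LinearMap.range d2B) := fun m =>
      { toLinearMap := (LinearMap.range d2B).mkQ ∘ₗ (TensorProduct.mk k M B m)
        map_one_eq_zero' := by
          show Submodule.Quotient.mk (m ⊗ₜ[k] (1:B)) = 0
          rw [Submodule.Quotient.mk_eq_zero]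
          exact mem1 m
        leibniz' := fun α β => by
          show Submodule.Quotient.mk (m ⊗ₜ[k] (α * β)) =
            α • Submodule.Quotient.mk (m ⊗ₜ[k] β) + β • Submodule.Quotient.mk (m ⊗ₜ[k] α)
          rw [hsmulQ, hsmulQ, ← Submodule.Quotient.mk_smul, ← Submodule.Quotient.mk_smul,
            ← Submodule.Quotient.mk_add, Submodule.Quotient.eq]
          refine ⟨-(m ⊗ₜ[k] α ⊗ₜ[k] β), ?_⟩
          rw [map_neg, hd2B, smul_tmul', smul_tmul']
          abel }
    have hδ : ∀ (m : M) (α : B), δ m α = Submodule.Quotient.mk (m ⊗ₜ[k] α) := fun m α => rfl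
    -- ψ : M ⊗[B] Ω → Q
    have hext : ∀ (f g : Ω[B⁄k] →ₗ[B] ((M ⊗[k] B) ⧸ LinearMap.range d2B)),
        (∀ α, f (KaehlerDifferential.D k B α) = g (KaehlerDifferential.D k B α)) → f = g := by
      intro f g h
      apply Derivation.liftKaehlerDifferential_unique
      ext α
      exact h α
    -- continued
    let L : M →ₗ[B] (Ω[B⁄k] →ₗ[B] ((M ⊗[k] B) ⧸ LinearMap.range d2B)) :=
      { toFun := fun m => (δ m).liftKaehlerDifferential
        map_add' := fun m m' => by
          apply hext
          intro α
          rw [LinearMap.add_apply, Derivation.liftKaehlerDifferential_comp_D,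
            Derivation.liftKaehlerDifferential_comp_D, Derivation.liftKaehlerDifferential_comp_D,
            hδ, hδ, hδ, ← Submodule.Quotient.mk_add, add_tmul]
        map_smul' := fun b m => by
          apply hext
          intro α
          rw [RingHom.id_apply, LinearMap.smul_apply, Derivation.liftKaehlerDifferential_comp_D,
            Derivation.liftKaehlerDifferential_comp_D, hδ, hδ, hsmulQ,
            ← Submodule.Quotient.mk_smul, hBM, smul_tmul'] }
    let ψ : (M ⊗[B] Ω[B⁄k]) →ₗ[B] ((M ⊗[k] B) ⧸ LinearMap.range d2B) := TensorProduct.lift L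
    have hψ : ∀ (m : M) (α : B), ψ (m ⊗ₜ[B] (KaehlerDifferential.D k B α)) =
        Submodule.Quotient.mk (m ⊗ₜ[k] α) := fun m α => by
      show L m (KaehlerDifferential.D k B α) = _
      exact (Derivation.liftKaehlerDifferential_comp_D (δ m) α).trans (hδ m α)
    -- φ : M ⊗[k] B → M ⊗[B] Ω
    let φ0 : M ⊗[k] B →ₗ[k] (M ⊗[B] Ω[B⁄k]) := TensorProduct.lift
      (LinearMap.mk₂ k (fun m α => m ⊗ₜ[B] (KaehlerDifferential.D k B α))
        (fun m m' α => add_tmul m m' _)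
        (fun c m α => (TensorProduct.smul_tmul' c m _).symm)
        (fun m α α' => by rw [map_add, tmul_add])
        (fun c m α => by rw [Derivation.map_smul, tmul_smul]))
    have hφ0 : ∀ (m : M) (α : B), φ0 (m ⊗ₜ[k] α) = m ⊗ₜ[B] (KaehlerDifferential.D k B α) :=
      fun m α => rfl
    have hle : LinearMap.range d2B ≤ LinearMap.ker φ0 := by
      rintro _ ⟨z, rfl⟩
      rw [LinearMap.mem_ker, ← LinearMap.comp_apply]
      have : φ0 ∘ₗ d2B = 0 := by
        ext m α β
        show φ0 (d2B (m ⊗ₜ[k] α ⊗ₜ[k] β)) = 0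
        rw [hd2B, map_add, map_sub, hφ0, hφ0, hφ0, Derivation.leibniz, tmul_add,
          ← smul_tmul, ← smul_tmul, hBM, hBM]
        abel
      rw [this]; rfl
    let φbar : ((M ⊗[k] B) ⧸ LinearMap.range d2B) →ₗ[k] (M ⊗[B] Ω[B⁄k]) :=
      Submodule.liftQ _ φ0 hle
    have hφbar : ∀ x, φbar (Submodule.Quotient.mk x) = φ0 x := fun x => rfl
    -- left inverse
    have hleft : ∀ q, ψ (φbar q) = q := by
      intro q
      obtain ⟨x, rfl⟩ := Submodule.Quotient.mk_surjective _ q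
      rw [hφbar]
      induction x using TensorProduct.induction_on with
      | zero => simp
      | tmul m α => rw [hφ0, hψ]
      | add x y hx hy => rw [map_add, map_add, hx, hy, Submodule.Quotient.mk_add]
    -- surjectivity
    have hsurj : Function.Surjective φbar := by
      have key : ∀ ω ∈ Submodule.span B (Set.range (KaehlerDifferential.D k B)),
          ∀ m : M, m ⊗ₜ[B] ω ∈ LinearMap.range φbar := by
        intro ω hω
        induction hω using Submodule.span_induction with
        | mem ω h =>
          obtain ⟨α, rfl⟩ := h
          exact fun m => ⟨Submodule.Quotient.mk (m ⊗ₜ[k] α), (hφbar _).trans (hφ0 m α)⟩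
        | zero => exact fun m => by rw [tmul_zero]; exact zero_mem _
        | add ω ω' _ _ hω hω' => exact fun m => by rw [tmul_add]; exact add_mem (hω m) (hω' m)
        | smul b ω _ hω => exact fun m => by rw [tmul_smul, smul_tmul']; exact hω (b • m)
      intro y
      have : ∀ y : M ⊗[B] Ω[B⁄k], y ∈ LinearMap.range φbar := by
        intro y
        induction y using TensorProduct.induction_on with
        | zero => exact zero_mem _
        | tmul m ω => exact key ω (by rw [KaehlerDifferential.span_range_derivation]; trivial) m
        | add x y hx hy => exact add_mem hx hy
      exact this y
    exact ⟨LinearEquiv.ofBijective φbar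
      ⟨Function.LeftInverse.injective hleft, hsurj⟩⟩
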